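/- Let ν be a Lévy measure on ℝ^d, let 0 < a < ∞, and let f : (0,a) → ℝ be measurable with ∫₀^a f(s)² ds < ∞. Then ∫₀^a |f(s)| ∫_{ℝ^d} |x| · |1/(1 + |f(s)x|²) − 1/(1 + |x|²)| ν(dx) ds ≤ (∫₀^a (f(s)²/2 + |f(s)|) ds) · ∫_{{|x| ≤ 1}} |x|² ν(dx) + (∫₀^a (|f(s)| + 1)/2 ds) · ν({x : |x| > 1}); in particular the left-hand side is finite. -/

import Mathlib

open MeasureTheory

private lemma stmt5_keyA (m t : ℝ) (hm : 0 ≤ m) (ht : 0 ≤ t) :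
    m * (t * |(1 + (m*t)^2)⁻¹ - (1 + t^2)⁻¹|) ≤ (m^2/2 + m) * t^2 := by
  have hp : (0:ℝ) < 1 + (m*t)^2 := by positivity
  have hq : (0:ℝ) < 1 + t^2 := by positivity
  rw [inv_sub_inv hp.ne' hq.ne', abs_div, abs_of_pos (mul_pos hp hq)]
  have hD : |(1 + t^2) - (1 + (m*t)^2)| ≤ t^2 + (m*t)^2 := by
    rw [abs_le]; constructor <;> nlinarith [sq_nonneg t, sq_nonneg (m*t)]
  have heq : m * (t * (|(1 + t^2) - (1 + (m*t)^2)| / ((1 + (m*t)^2) * (1 + t^2))))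
      = m * t * |(1 + t^2) - (1 + (m*t)^2)| / ((1 + (m*t)^2) * (1 + t^2)) := by ring
  rw [heq, div_le_iff₀ (mul_pos hp hq)]
  have h1 : m*t^3 ≤ m*t^2*(1+t^2)/2 := by
    nlinarith [mul_nonneg (mul_nonneg hm (sq_nonneg t)) (sq_nonneg (t-1))]
  have h2 : m^3*t^3 ≤ m^2/2 * t^2 * (1+(m*t)^2) := by
    nlinarith [mul_nonneg (mul_nonneg (sq_nonneg m) (sq_nonneg t)) (sq_nonneg (m*t-1))]
  have hmt : 0 ≤ m * t := mul_nonneg hm ht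
  nlinarith [hD, h1, h2, mul_nonneg hmt (abs_nonneg ((1 + t^2) - (1 + (m*t)^2))),
    mul_nonneg (mul_nonneg hm (sq_nonneg t)) (sq_nonneg (m*t)),
    mul_nonneg (mul_nonneg (sq_nonneg m) (sq_nonneg t)) (sq_nonneg t)]

private lemma stmt5_keyB (m t : ℝ) (hm : 0 ≤ m) (ht1 : 1 < t) :
    m * (t * |(1 + (m*t)^2)⁻¹ - (1 + t^2)⁻¹|) ≤ (m + 1) / 2 := by
  have ht : 0 ≤ t := by linarith
  have hp : (0:ℝ) < 1 + (m*t)^2 := by positivity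
  have hq : (0:ℝ) < 1 + t^2 := by positivity
  rw [inv_sub_inv hp.ne' hq.ne', abs_div, abs_of_pos (mul_pos hp hq)]
  have hD : |(1 + t^2) - (1 + (m*t)^2)| ≤ t^2 + (m*t)^2 := by
    rw [abs_le]; constructor <;> nlinarith [sq_nonneg t, sq_nonneg (m*t)]
  have heq : m * (t * (|(1 + t^2) - (1 + (m*t)^2)| / ((1 + (m*t)^2) * (1 + t^2))))
      = m * t * |(1 + t^2) - (1 + (m*t)^2)| / ((1 + (m*t)^2) * (1 + t^2)) := by ring
  rw [heq, div_le_iff₀ (mul_pos hp hq)]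
  have hmt : 0 ≤ m * t := mul_nonneg hm ht
  -- m t³ ≤ (1/2)(1+m²t²)(1+t²) : since 2mt ≤ 1+(mt)² and t² ≤ 1+t²
  have h1 : m*t^3 ≤ (1 + (m*t)^2) * (1 + t^2) / 2 := by
    nlinarith [sq_nonneg (m*t-1), sq_nonneg t, mul_nonneg (sq_nonneg (m*t-1)) (sq_nonneg t)]
  -- m³t³ ≤ m(1+m²t²)(1+t²)/2 : since m²t² ≤ 1+(mt)² and 2t ≤ 1+t²
  have h2 : m^3*t^3 ≤ m * (1 + (m*t)^2) * (1 + t^2) / 2 := by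
    nlinarith [mul_nonneg hm (sq_nonneg (t-1)), mul_nonneg (mul_nonneg hm (sq_nonneg (m*t))) (sq_nonneg (t-1)),
      mul_nonneg hm (sq_nonneg (m*t)), mul_nonneg hm (mul_nonneg (sq_nonneg (m*t)) (sq_nonneg t))]
  nlinarith [hD, h1, h2, mul_nonneg hmt (abs_nonneg ((1 + t^2) - (1 + (m*t)^2)))]

private lemma inner_bound {d : ℕ} (ν : Measure (EuclideanSpace ℝ (Fin d))) (c : ℝ) :
    ENNReal.ofReal |c| * ∫⁻ x, ENNReal.ofReal (‖x‖ * |(1 + ‖c • x‖ ^ 2)⁻¹ - (1 + ‖x‖ ^ 2)⁻¹|) ∂ν ≤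
      ENNReal.ofReal (c ^ 2 / 2 + |c|) *
          (∫⁻ x in {x : EuclideanSpace ℝ (Fin d) | ‖x‖ ≤ 1}, ENNReal.ofReal (‖x‖ ^ 2) ∂ν) +
        ENNReal.ofReal ((|c| + 1) / 2) * ν {x : EuclideanSpace ℝ (Fin d) | 1 < ‖x‖} := by
  set S : Set (EuclideanSpace ℝ (Fin d)) := {x | ‖x‖ ≤ 1} with hSdef
  have hS : MeasurableSet S := measurableSet_le continuous_norm.measurable measurable_const
  have hgc : Measurable fun x : EuclideanSpace ℝ (Fin d) =>
      ENNReal.ofReal (‖x‖ * |(1 + ‖c • x‖ ^ 2)⁻¹ - (1 + ‖x‖ ^ 2)⁻¹|) := by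
    have : Continuous fun x : EuclideanSpace ℝ (Fin d) =>
        ‖x‖ * |(1 + ‖c • x‖ ^ 2)⁻¹ - (1 + ‖x‖ ^ 2)⁻¹| := by
      apply continuous_norm.mul
      apply Continuous.abs
      apply Continuous.sub
      · exact ((continuous_const.add (((continuous_id.const_smul c : Continuous fun x : EuclideanSpace ℝ (Fin d) => c • x).norm).pow 2)).inv₀
          (fun x => (by positivity : (0:ℝ) < 1 + ‖c • x‖ ^ 2).ne'))
      · exact ((continuous_const.add (continuous_norm.pow 2)).inv₀ (fun x => (by positivity : (0:ℝ) < 1 + ‖x‖ ^ 2).ne'))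
    exact this.measurable.ennreal_ofReal
  rw [← lintegral_const_mul'' _ hgc.aemeasurable]
  have hrw : ∀ x : EuclideanSpace ℝ (Fin d),
      ENNReal.ofReal |c| * ENNReal.ofReal (‖x‖ * |(1 + ‖c • x‖ ^ 2)⁻¹ - (1 + ‖x‖ ^ 2)⁻¹|)
      = ENNReal.ofReal (|c| * (‖x‖ * |(1 + (|c| * ‖x‖) ^ 2)⁻¹ - (1 + ‖x‖ ^ 2)⁻¹|)) := by
    intro x
    rw [← ENNReal.ofReal_mul (abs_nonneg c), norm_smul, Real.norm_eq_abs]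
  simp only [hrw]
  rw [← lintegral_add_compl _ hS]
  have hcompl : Sᶜ = {x : EuclideanSpace ℝ (Fin d) | 1 < ‖x‖} := by
    ext x; simp [hSdef, not_le]
  gcongr
  · -- on S
    calc ∫⁻ x in S, ENNReal.ofReal (|c| * (‖x‖ * |(1 + (|c| * ‖x‖) ^ 2)⁻¹ - (1 + ‖x‖ ^ 2)⁻¹|)) ∂ν
        ≤ ∫⁻ x in S, ENNReal.ofReal (c ^ 2 / 2 + |c|) * ENNReal.ofReal (‖x‖ ^ 2) ∂ν := by
          apply setLIntegral_mono (by fun_prop) (fun x _ => ?_)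
          rw [← ENNReal.ofReal_mul (by positivity)]
          apply ENNReal.ofReal_le_ofReal
          have := stmt5_keyA |c| ‖x‖ (abs_nonneg c) (norm_nonneg x)
          calc |c| * (‖x‖ * |(1 + (|c| * ‖x‖) ^ 2)⁻¹ - (1 + ‖x‖ ^ 2)⁻¹|)
              ≤ (|c| ^ 2 / 2 + |c|) * ‖x‖ ^ 2 := this
            _ = (c ^ 2 / 2 + |c|) * ‖x‖ ^ 2 := by rw [sq_abs]
      _ = ENNReal.ofReal (c ^ 2 / 2 + |c|) * ∫⁻ x in S, ENNReal.ofReal (‖x‖ ^ 2) ∂ν := by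
          rw [lintegral_const_mul'' _ (by fun_prop : Measurable fun x : EuclideanSpace ℝ (Fin d) => ENNReal.ofReal (‖x‖ ^ 2)).aemeasurable]
  · -- on Sᶜ
    calc ∫⁻ x in Sᶜ, ENNReal.ofReal (|c| * (‖x‖ * |(1 + (|c| * ‖x‖) ^ 2)⁻¹ - (1 + ‖x‖ ^ 2)⁻¹|)) ∂ν
        ≤ ∫⁻ _x in Sᶜ, ENNReal.ofReal ((|c| + 1) / 2) ∂ν := by
          apply setLIntegral_mono measurable_const (fun x hx => ?_)
          apply ENNReal.ofReal_le_ofReal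
          have hx1 : 1 < ‖x‖ := by simpa [hSdef, not_le] using hx
          exact stmt5_keyB |c| ‖x‖ (abs_nonneg c) hx1
      _ = ENNReal.ofReal ((|c| + 1) / 2) * ν Sᶜ := by rw [setLIntegral_const]
      _ = ENNReal.ofReal ((|c| + 1) / 2) * ν {x : EuclideanSpace ℝ (Fin d) | 1 < ‖x‖} := by
          rw [hcompl]

/-- Bound for the centering-term integral
`∫₀^a |f(s)| ∫ |x| |1/(1+|f(s)x|²) − 1/(1+|x|²)| ν(dx) ds`; in particular it is finite. -/
theorem stmt_5 (d : ℕ) (hd : 1 ≤ d)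
    (ν : Measure (EuclideanSpace ℝ (Fin d)))
    (hν0 : ν {0} = 0)
    (hνfin : ∫⁻ x, ENNReal.ofReal (min (‖x‖ ^ 2) 1) ∂ν < ⊤)
    (a : ℝ) (ha : 0 < a) (f : ℝ → ℝ) (hf : Measurable f)
    (hf2 : ∫⁻ s in Set.Ioo 0 a, ENNReal.ofReal (f s ^ 2) < ⊤) :
    (∫⁻ s in Set.Ioo (0 : ℝ) a, ENNReal.ofReal |f s| *
        ∫⁻ x, ENNReal.ofReal (‖x‖ * |(1 + ‖f s • x‖ ^ 2)⁻¹ - (1 + ‖x‖ ^ 2)⁻¹|) ∂ν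
      ≤ (∫⁻ s in Set.Ioo (0 : ℝ) a, ENNReal.ofReal (f s ^ 2 / 2 + |f s|)) *
          (∫⁻ x in {x : EuclideanSpace ℝ (Fin d) | ‖x‖ ≤ 1}, ENNReal.ofReal (‖x‖ ^ 2) ∂ν) +
        (∫⁻ s in Set.Ioo (0 : ℝ) a, ENNReal.ofReal ((|f s| + 1) / 2)) *
          ν {x : EuclideanSpace ℝ (Fin d) | 1 < ‖x‖}) ∧
    (∫⁻ s in Set.Ioo (0 : ℝ) a, ENNReal.ofReal |f s| *
        ∫⁻ x, ENNReal.ofReal (‖x‖ * |(1 + ‖f s • x‖ ^ 2)⁻¹ - (1 + ‖x‖ ^ 2)⁻¹|) ∂ν < ⊤) := by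
  set K1 := ∫⁻ x in {x : EuclideanSpace ℝ (Fin d) | ‖x‖ ≤ 1}, ENNReal.ofReal (‖x‖ ^ 2) ∂ν with hK1def
  set K2 := ν {x : EuclideanSpace ℝ (Fin d) | 1 < ‖x‖} with hK2def
  have hmeasA : Measurable fun s => ENNReal.ofReal (f s ^ 2 / 2 + |f s|) := by fun_prop
  have hmeasB : Measurable fun s => ENNReal.ofReal ((|f s| + 1) / 2) := by fun_prop
  have main : ∫⁻ s in Set.Ioo (0 : ℝ) a, ENNReal.ofReal |f s| *
        ∫⁻ x, ENNReal.ofReal (‖x‖ * |(1 + ‖f s • x‖ ^ 2)⁻¹ - (1 + ‖x‖ ^ 2)⁻¹|) ∂ν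
      ≤ (∫⁻ s in Set.Ioo (0 : ℝ) a, ENNReal.ofReal (f s ^ 2 / 2 + |f s|)) * K1 +
        (∫⁻ s in Set.Ioo (0 : ℝ) a, ENNReal.ofReal ((|f s| + 1) / 2)) * K2 := by
    calc ∫⁻ s in Set.Ioo (0 : ℝ) a, ENNReal.ofReal |f s| *
          ∫⁻ x, ENNReal.ofReal (‖x‖ * |(1 + ‖f s • x‖ ^ 2)⁻¹ - (1 + ‖x‖ ^ 2)⁻¹|) ∂ν
        ≤ ∫⁻ s in Set.Ioo (0 : ℝ) a,
            (ENNReal.ofReal (f s ^ 2 / 2 + |f s|) * K1 + ENNReal.ofReal ((|f s| + 1) / 2) * K2) :=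
          lintegral_mono fun s => inner_bound ν (f s)
      _ = (∫⁻ s in Set.Ioo (0 : ℝ) a, ENNReal.ofReal (f s ^ 2 / 2 + |f s|) * K1) +
          (∫⁻ s in Set.Ioo (0 : ℝ) a, ENNReal.ofReal ((|f s| + 1) / 2) * K2) := by
          rw [lintegral_add_left (hmeasA.mul_const _)]
      _ = (∫⁻ s in Set.Ioo (0 : ℝ) a, ENNReal.ofReal (f s ^ 2 / 2 + |f s|)) * K1 +
          (∫⁻ s in Set.Ioo (0 : ℝ) a, ENNReal.ofReal ((|f s| + 1) / 2)) * K2 := by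
          rw [lintegral_mul_const _ hmeasA, lintegral_mul_const _ hmeasB]
  refine ⟨main, lt_of_le_of_lt main ?_⟩
  -- finiteness
  have hvol : volume (Set.Ioo (0:ℝ) a) < ⊤ := by
    rw [Real.volume_Ioo]; exact ENNReal.ofReal_lt_top
  have hbound : ∀ (g : ℝ → ℝ) (C : ℝ), (∀ s, g s ≤ f s ^ 2 + C) →
      ∫⁻ s in Set.Ioo (0 : ℝ) a, ENNReal.ofReal (g s) < ⊤ := by
    intro g C hg
    calc ∫⁻ s in Set.Ioo (0 : ℝ) a, ENNReal.ofReal (g s)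
        ≤ ∫⁻ s in Set.Ioo (0 : ℝ) a, (ENNReal.ofReal (f s ^ 2) + ENNReal.ofReal C) := by
          apply lintegral_mono fun s => ?_
          exact le_trans (ENNReal.ofReal_le_ofReal (hg s)) (ENNReal.ofReal_add_le)
      _ = (∫⁻ s in Set.Ioo (0 : ℝ) a, ENNReal.ofReal (f s ^ 2)) +
          ENNReal.ofReal C * volume (Set.Ioo (0:ℝ) a) := by
          rw [lintegral_add_right _ measurable_const, lintegral_const,
            Measure.restrict_apply_univ]
      _ < ⊤ := ENNReal.add_lt_top.mpr ⟨hf2, ENNReal.mul_lt_top ENNReal.ofReal_lt_top hvol⟩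
  have hA : ∫⁻ s in Set.Ioo (0 : ℝ) a, ENNReal.ofReal (f s ^ 2 / 2 + |f s|) < ⊤ := by
    apply hbound _ (1/2) fun s => ?_
    nlinarith [sq_nonneg (|f s| - 1), sq_abs (f s), sq_nonneg (f s)]
  have hB : ∫⁻ s in Set.Ioo (0 : ℝ) a, ENNReal.ofReal ((|f s| + 1) / 2) < ⊤ := by
    apply hbound _ 1 fun s => ?_
    nlinarith [sq_nonneg (|f s| - 1), sq_abs (f s), sq_nonneg (f s)]
  have hK1 : K1 < ⊤ := by
    calc K1 = ∫⁻ x in {x : EuclideanSpace ℝ (Fin d) | ‖x‖ ≤ 1},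
          ENNReal.ofReal (min (‖x‖ ^ 2) 1) ∂ν := by
          apply setLIntegral_congr_fun
            (measurableSet_le continuous_norm.measurable measurable_const)
          intro x hx
          have hx' : ‖x‖ ≤ 1 := hx
          have : ‖x‖ ^ 2 ≤ 1 := by nlinarith [norm_nonneg x]
          beta_reduce
          rw [min_eq_left this]
      _ ≤ ∫⁻ x, ENNReal.ofReal (min (‖x‖ ^ 2) 1) ∂ν := setLIntegral_le_lintegral _ _
      _ < ⊤ := hνfin
  have hK2 : K2 < ⊤ := by
    calc K2 = ∫⁻ _x in {x : EuclideanSpace ℝ (Fin d) | 1 < ‖x‖}, 1 ∂ν := (setLIntegral_one _).symm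
      _ ≤ ∫⁻ x in {x : EuclideanSpace ℝ (Fin d) | 1 < ‖x‖},
            ENNReal.ofReal (min (‖x‖ ^ 2) 1) ∂ν := by
          apply setLIntegral_mono (by fun_prop) (fun x hx => ?_)
          have hx1 : (1:ℝ) < ‖x‖ := hx
          have : min (‖x‖ ^ 2) 1 = 1 := min_eq_right (by nlinarith)
          rw [this]; simp
      _ ≤ ∫⁻ x, ENNReal.ofReal (min (‖x‖ ^ 2) 1) ∂ν := setLIntegral_le_lintegral _ _
      _ < ⊤ := hνfin
  exact ENNReal.add_lt_top.mpr ⟨ENNReal.mul_lt_top hA hK1, ENNReal.mul_lt_top hB hK2⟩
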